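/- arXiv:2211.16180 — 3 statements merged into one kernel-verified Lean document; each statement's English description precedes it below -/
import Mathlib

section
/- Let K be a relatively closed subset of an open set Ω ⊆ ℝ^N, let x₀ ∈ K and r₀ > 0 be such that B(x₀,r₀) ⊆ Ω. Let ε₀ ∈ [0,1/2], assume that β_K(x₀,r₀) ≤ ε₀ and that K separates in B(x₀,r₀). Then for all x ∈ K ∩ B(x₀,r₀) and all r > 0 such that B(x,r) ⊆ B(x₀,r₀) and r ≥ 4 ε₀ r₀, one has β_K(x,r) ≤ 1/2 and K separates in B(x,r). -/
open Metric MeasureTheory Set Filter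
open scoped RealInnerProductSpace ENNReal NNReal Topology

noncomputable section

abbrev Euc (N : ℕ) := EuclideanSpace ℝ (Fin N)

variable {N : ℕ}

/-- Affine hyperplane through `x` with normal `ν`. -/
def hplane (x ν : Euc N) : Set (Euc N) := {y | (inner ℝ (y - x) ν : ℝ) = 0}

/-- Bilateral flatness `β_K(x,r)`. -/
def flatness (K : Set (Euc N)) (x : Euc N) (r : ℝ) : ℝ :=
  r⁻¹ * ⨅ ν : {ν : Euc N // ‖ν‖ = 1},
    max (⨆ y : ↥(K ∩ ball x r), infDist (y : Euc N) (hplane x ν.1))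
        (⨆ y : ↥(hplane x ν.1 ∩ ball x r), infDist (y : Euc N) K)

/-- `K` is relatively closed in `Ω`. -/
def RelClosedIn (K Ω : Set (Euc N)) : Prop := K ⊆ Ω ∧ closure K ∩ Ω ⊆ K

/-- Connected component of `B(x₀,r₀) \ K` containing `x₀ + (3/4) r₀ ν`. -/
def posCompo (K : Set (Euc N)) (x₀ : Euc N) (r₀ : ℝ) (ν : Euc N) : Set (Euc N) :=
  connectedComponentIn (ball x₀ r₀ \ K) (x₀ + (3 / 4 * r₀) • ν)

/-- Connected component of `B(x₀,r₀) \ K` containing `x₀ - (3/4) r₀ ν`. -/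
def negCompo (K : Set (Euc N)) (x₀ : Euc N) (r₀ : ℝ) (ν : Euc N) : Set (Euc N) :=
  connectedComponentIn (ball x₀ r₀ \ K) (x₀ - (3 / 4 * r₀) • ν)

/-- `K` separates in `B(x₀,r₀)` with respect to the hyperplane through `x₀` of unit normal `ν`. -/
def SeparatesWith (K : Set (Euc N)) (x₀ : Euc N) (r₀ : ℝ) (ν : Euc N) : Prop :=
  ‖ν‖ = 1 ∧
  (∀ y ∈ K ∩ ball x₀ r₀, infDist y (hplane x₀ ν) ≤ r₀ / 2) ∧
  ball (x₀ + (3 / 4 * r₀) • ν) (r₀ / 4) ⊆ posCompo K x₀ r₀ ν ∧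
  ball (x₀ - (3 / 4 * r₀) • ν) (r₀ / 4) ⊆ negCompo K x₀ r₀ ν ∧
  posCompo K x₀ r₀ ν ≠ negCompo K x₀ r₀ ν

/-- `K` separates in `B(x₀,r₀)`. -/
def Separates (K : Set (Euc N)) (x₀ : Euc N) (r₀ : ℝ) : Prop := ∃ ν, SeparatesWith K x₀ r₀ ν

/-- The symmetrized gradient `e(u) = (Du + Duᵀ)/2`. -/
def symGrad (u : Euc N → Euc N) (x : Euc N) (i j : Fin N) : ℝ :=
  (fderiv ℝ u x (EuclideanSpace.single j 1) i + fderiv ℝ u x (EuclideanSpace.single i 1) j) / 2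

/-- `|e(u)|²`. -/
def eDensity (u : Euc N → Euc N) (x : Euc N) : ℝ := ∑ i, ∑ j, (symGrad u x i j) ^ 2

/-- Elastic energy `∫_S |e(u)|² dx`. -/
def energy (u : Euc N → Euc N) (S : Set (Euc N)) : ℝ := ∫ x in S, eDensity u x

/-- Admissible pair `(u,K)` in `Ω`. -/
def Admissible (Ω : Set (Euc N)) (u : Euc N → Euc N) (K : Set (Euc N)) : Prop :=
  RelClosedIn K Ω ∧ DifferentiableOn ℝ u (Ω \ K) ∧ LocallyIntegrableOn (eDensity u) (Ω \ K)

/-- `K` is coral. -/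
def Coral (K : Set (Euc N)) : Prop := ∀ x ∈ K, ∀ r > 0, 0 < μH[(N : ℝ) - 1] (K ∩ ball x r)

/-- `(v,L)` is a competitor of `(u,K)` in `B(x,r)`. -/
def Competitor (Ω : Set (Euc N)) (u : Euc N → Euc N) (K : Set (Euc N)) (x : Euc N) (r : ℝ)
    (v : Euc N → Euc N) (L : Set (Euc N)) : Prop :=
  Admissible Ω v L ∧ L \ ball x r = K \ ball x r ∧
  ∀ᵐ y ∂(volume : Measure (Euc N)), y ∈ Ω \ (K ∪ ball x r) → v y = u y

/-- `(u,K)` is a Griffith almost-minimizer with gauge `h` in `Ω`. -/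
def GriffithAM (Ω : Set (Euc N)) (h : ℝ → ℝ) (u : Euc N → Euc N) (K : Set (Euc N)) : Prop :=
  Admissible Ω u K ∧ Coral K ∧
  ∀ x r, 0 < r → closure (ball x r) ⊆ Ω →
    ∀ v L, Competitor Ω u K x r v L →
      ENNReal.ofReal (energy u (ball x r \ K)) + μH[(N : ℝ) - 1] (K ∩ ball x r) ≤
      ENNReal.ofReal (energy v (ball x r \ L)) + μH[(N : ℝ) - 1] (L ∩ ball x r) +
        ENNReal.ofReal (h r * r ^ (N - 1))

/-- Normalized energy `ω_u(x,r)`. -/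
def nenergy (u : Euc N → Euc N) (K : Set (Euc N)) (x : Euc N) (r : ℝ) : ℝ :=
  energy u (ball x r \ K) / r ^ (N - 1)

/-- A deformation of `E` in the ball `B`, inside the ambient open set `Ω`. -/
def IsDeformation (Ω E B : Set (Euc N)) (f : Euc N → Euc N) : Prop :=
  (∃ L : ℝ≥0, LipschitzOnWith L f E) ∧ f '' E ⊆ Ω ∧ f '' (E ∩ B) ⊆ B ∧
  IsCompact (closure {x | x ∈ E ∧ f x ≠ x}) ∧ closure {x | x ∈ E ∧ f x ≠ x} ⊆ B

/-- `F` is a topological competitor of `E` in the ball `B`. -/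
def TopCompetitor (Ω E B F : Set (Euc N)) : Prop :=
  ∃ f, IsDeformation Ω E B f ∧ F = f '' E

/-- `E` is an almost-minimal set in `V` with gauge `g`. -/
def AlmostMinimalSet (V : Set (Euc N)) (g : ℝ → ℝ≥0∞) (E : Set (Euc N)) : Prop :=
  RelClosedIn E V ∧ (∀ x ∈ V, ∃ r > 0, μH[(N : ℝ) - 1] (E ∩ ball x r) < ⊤) ∧
  ∀ x ∈ E, ∀ r, 0 < r → ball x r ⊆ V →
    ∀ f : Euc N → Euc N, IsDeformation V E (ball x r) f →
      μH[(N : ℝ) - 1] (E ∩ ball x r) ≤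
        μH[(N : ℝ) - 1] (f '' (E ∩ ball x r)) + g r * ENNReal.ofReal (r ^ (N - 1))

/-- `E` is a minimal set in `V`. -/
def MinimalSet (V E : Set (Euc N)) : Prop := AlmostMinimalSet V (fun _ => 0) E

/-- Hypothesis `H(ε₀, x₀, r₀)`. -/
def HypH (Ω K : Set (Euc N)) (ε₀ : ℝ) (x₀ : Euc N) (r₀ : ℝ) : Prop :=
  ball x₀ r₀ ⊆ Ω ∧ Separates K x₀ r₀ ∧ flatness K x₀ r₀ ≤ ε₀

/-- Geometric function with parameters `(ρ, τ)`. -/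
def GeomFn (K : Set (Euc N)) (x₀ : Euc N) (r₀ ρ τ : ℝ) (δ : Euc N → ℝ) : Prop :=
  LipschitzOnWith 100 δ (K ∩ closure (ball x₀ ρ)) ∧
  (∀ x ∈ K ∩ closure (ball x₀ ρ), δ x ∈ Icc 0 (r₀ / 4)) ∧
  ∀ x ∈ K ∩ closure (ball x₀ ρ), ∀ r ∈ Ioc (δ x) (r₀ / 4), flatness K x r ≤ τ

/-- The stopping distance `d(x)` of the bad-mass construction. -/
def stopR (τ : ℝ) (K : Set (Euc N)) (r₀ : ℝ) (x : Euc N) : ℝ :=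
  sInf {r : ℝ | 0 < r ∧ ∀ t ∈ Icc r (r₀ / 4), flatness K x t ≤ τ}

/-- The bad region `R(x₀,r₀)`. -/
def badRegion (τ A : ℝ) (K : Set (Euc N)) (x₀ : Euc N) (r₀ : ℝ) : Set (Euc N) :=
  ⋃ x ∈ K ∩ closure (ball x₀ (3 * r₀ / 4)),
    ⋃ (_ : 0 < stopR τ K r₀ x), ball x (A * stopR τ K r₀ x)

/-- The bad mass `m_K(x₀,r₀)`. -/
def badMass (τ A : ℝ) (K : Set (Euc N)) (x₀ : Euc N) (r₀ : ℝ) : ℝ :=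
  (μH[(N : ℝ) - 1] (K ∩ badRegion τ A K x₀ r₀)).toReal / r₀ ^ (N - 1)

end

section SepAux
variable {N : ℕ}

lemma mem_hplane_self (x ν : Euc N) : x ∈ hplane x ν := by simp [hplane]

lemma infDist_hplane {ν : Euc N} (hν : ‖ν‖ = 1) (x y : Euc N) :
    infDist y (hplane x ν) = |⟪y - x, ν⟫| := by
  apply le_antisymm
  · have hz : y - ⟪y - x, ν⟫ • ν ∈ hplane x ν := by
      show (inner ℝ (y - ⟪y - x, ν⟫ • ν - x) ν : ℝ) = 0
      have he : y - ⟪y - x, ν⟫ • ν - x = (y - x) - ⟪y - x, ν⟫ • ν := by abel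
      rw [he, inner_sub_left, real_inner_smul_left, real_inner_self_eq_norm_sq, hν]
      ring
    refine (infDist_le_dist_of_mem hz).trans_eq ?_
    rw [dist_eq_norm]
    have he : y - (y - ⟪y - x, ν⟫ • ν) = ⟪y - x, ν⟫ • ν := by abel
    rw [he, norm_smul, hν, mul_one, Real.norm_eq_abs]
  · refine le_of_not_gt fun h => ?_
    obtain ⟨z, hz, hdz⟩ := (infDist_lt_iff ⟨x, mem_hplane_self x ν⟩).1 h
    have hz0 : (inner ℝ (z - x) ν : ℝ) = 0 := hz
    have he : ⟪y - x, ν⟫ = ⟪y - z, ν⟫ + ⟪z - x, ν⟫ := by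
      rw [← inner_add_left]; congr 1; abel
    have hle : |⟪y - x, ν⟫| ≤ ‖y - z‖ := by
      rw [he, hz0, add_zero]
      calc |⟪y - z, ν⟫| ≤ ‖y - z‖ * ‖ν‖ := abs_real_inner_le_norm _ _
        _ = ‖y - z‖ := by rw [hν, mul_one]
    rw [dist_eq_norm] at hdz
    exact (hle.trans_lt hdz).false

lemma norm_proj_le {ν : Euc N} (hν : ‖ν‖ = 1) (v : Euc N) :
    ‖v - ⟪v, ν⟫ • ν‖ ≤ ‖v‖ := by
  have h := @norm_sub_sq_real (Euc N) _ _ v (⟪v, ν⟫ • ν)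
  have h1 : (inner ℝ v (⟪v, ν⟫ • ν) : ℝ) = ⟪v, ν⟫ * ⟪v, ν⟫ := by
    rw [real_inner_smul_right]
  have h2 : ‖⟪v, ν⟫ • ν‖ ^ 2 = ⟪v, ν⟫ * ⟪v, ν⟫ := by
    rw [norm_smul, hν, mul_one, Real.norm_eq_abs, sq_abs]; ring
  nlinarith [norm_nonneg (v - ⟪v, ν⟫ • ν), norm_nonneg v]


lemma exists_good_normal (hN : 0 < N) (K : Set (Euc N)) (x₀ : Euc N) (hx₀ : x₀ ∈ K)
    {r₀ ε₀ : ℝ} (hr₀ : 0 < r₀) (hβ : flatness K x₀ r₀ ≤ ε₀) :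
    ∃ ν : Euc N, ‖ν‖ = 1 ∧
      (∀ y ∈ K ∩ ball x₀ r₀, |⟪y - x₀, ν⟫| ≤ ε₀ * r₀) ∧
      (∀ y ∈ ball x₀ r₀, ⟪y - x₀, ν⟫ = 0 → infDist y K ≤ ε₀ * r₀) := by
  haveI : Nonempty {ν : Euc N // ‖ν‖ = 1} :=
    ⟨⟨EuclideanSpace.single ⟨0, hN⟩ (1 : ℝ), by simp [EuclideanSpace.norm_single]⟩⟩
  set I : ℝ := ⨅ ν : {ν : Euc N // ‖ν‖ = 1},
    max (⨆ y : ↥(K ∩ ball x₀ r₀), infDist (y : Euc N) (hplane x₀ ν.1))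
        (⨆ y : ↥(hplane x₀ ν.1 ∩ ball x₀ r₀), infDist (y : Euc N) K) with hI
  have hIle : I ≤ ε₀ * r₀ := by
    have : r₀⁻¹ * I ≤ ε₀ := hβ
    calc I = r₀ * (r₀⁻¹ * I) := by field_simp
      _ ≤ r₀ * ε₀ := by
          exact mul_le_mul_of_nonneg_left this hr₀.le
      _ = ε₀ * r₀ := mul_comm _ _
  have hsel : ∀ n : ℕ, ∃ ν : Euc N, ‖ν‖ = 1 ∧
      (∀ y ∈ K ∩ ball x₀ r₀, infDist y (hplane x₀ ν) ≤ ε₀ * r₀ + 1 / (n + 1)) ∧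
      (∀ y ∈ hplane x₀ ν ∩ ball x₀ r₀, infDist y K ≤ ε₀ * r₀ + 1 / (n + 1)) := by
    intro n
    have hpos : (0 : ℝ) < 1 / (n + 1) := by positivity
    have hlt : I < ε₀ * r₀ + 1 / (n + 1) := lt_of_le_of_lt hIle (by linarith)
    obtain ⟨⟨ν, hν⟩, hνlt⟩ := exists_lt_of_ciInf_lt hlt
    refine ⟨ν, hν, ?_, ?_⟩
    · intro y hy
      have hb : BddAbove (Set.range fun y : ↥(K ∩ ball x₀ r₀) =>
          infDist (y : Euc N) (hplane x₀ ν)) := by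
        refine ⟨r₀, ?_⟩
        rintro _ ⟨z, rfl⟩
        exact (infDist_le_dist_of_mem (mem_hplane_self x₀ ν)).trans (mem_ball.1 z.2.2).le
      have := le_ciSup hb (⟨y, hy⟩ : ↥(K ∩ ball x₀ r₀))
      exact this.trans ((le_max_left _ _).trans hνlt.le)
    · intro y hy
      have hb : BddAbove (Set.range fun y : ↥(hplane x₀ ν ∩ ball x₀ r₀) =>
          infDist (y : Euc N) K) := by
        refine ⟨r₀, ?_⟩
        rintro _ ⟨z, rfl⟩
        exact (infDist_le_dist_of_mem hx₀).trans (mem_ball.1 z.2.2).le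
      have := le_ciSup hb (⟨y, hy⟩ : ↥(hplane x₀ ν ∩ ball x₀ r₀))
      exact this.trans ((le_max_right _ _).trans hνlt.le)
  choose νs hνs1 hνs2 hνs3 using hsel
  obtain ⟨ν, hνmem, φ, hφ, hconv⟩ := (isCompact_sphere (0 : Euc N) 1).tendsto_subseq
    (fun n => mem_sphere_zero_iff_norm.2 (hνs1 n))
  have hν : ‖ν‖ = 1 := mem_sphere_zero_iff_norm.1 hνmem
  have hφtop : Tendsto φ atTop atTop := hφ.tendsto_atTop
  have hone : Tendsto (fun n => 1 / ((φ n : ℝ) + 1)) atTop (𝓝 0) :=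
    tendsto_one_div_add_atTop_nhds_zero_nat.comp hφtop
  refine ⟨ν, hν, ?_, ?_⟩
  · intro y hy
    have htend : Tendsto (fun n => |⟪y - x₀, νs (φ n)⟫|) atTop (𝓝 |⟪y - x₀, ν⟫|) :=
      (Filter.Tendsto.inner tendsto_const_nhds hconv).abs
    have hrhs : Tendsto (fun n => ε₀ * r₀ + 1 / ((φ n : ℝ) + 1)) atTop (𝓝 (ε₀ * r₀ + 0)) :=
      tendsto_const_nhds.add hone
    rw [add_zero] at hrhs
    refine le_of_tendsto_of_tendsto' htend hrhs fun n => ?_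
    rw [← infDist_hplane (hνs1 (φ n)) x₀ y]
    exact_mod_cast hνs2 (φ n) y hy
  · intro y hy hy0
    have hyb : dist y x₀ < r₀ := mem_ball.1 hy
    have key : ∀ n, infDist y K ≤ ε₀ * r₀ + 1 / ((φ n : ℝ) + 1) + |⟪y - x₀, νs (φ n)⟫| := by
      intro n
      set w := νs (φ n)
      have hw : ‖w‖ = 1 := hνs1 (φ n)
      set c : ℝ := ⟪y - x₀, w⟫ with hc
      set y' : Euc N := y - c • w with hy'
      have h1 : y' ∈ hplane x₀ w := by
        show (inner ℝ (y' - x₀) w : ℝ) = 0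
        have he : y' - x₀ = (y - x₀) - c • w := by rw [hy']; abel
        rw [he, inner_sub_left, real_inner_smul_left, real_inner_self_eq_norm_sq, hw, hc]
        ring
      have h2 : y' ∈ ball x₀ r₀ := by
        rw [mem_ball, dist_eq_norm]
        have he : y' - x₀ = (y - x₀) - ⟪y - x₀, w⟫ • w := by rw [hy', hc]; abel
        rw [he]
        calc ‖(y - x₀) - ⟪y - x₀, w⟫ • w‖ ≤ ‖y - x₀‖ := norm_proj_le hw _
          _ < r₀ := by rwa [← dist_eq_norm]
      have h3 : infDist y' K ≤ ε₀ * r₀ + 1 / ((φ n : ℝ) + 1) := by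
        exact_mod_cast hνs3 (φ n) y' ⟨h1, h2⟩
      have h4 : dist y y' = |c| := by
        rw [dist_eq_norm]
        have he : y - y' = c • w := by rw [hy']; abel
        rw [he, norm_smul, hw, mul_one, Real.norm_eq_abs]
      calc infDist y K ≤ infDist y' K + dist y y' := infDist_le_infDist_add_dist
        _ ≤ ε₀ * r₀ + 1 / ((φ n : ℝ) + 1) + |c| := by rw [h4]; exact add_le_add_left h3 _
    have htend : Tendsto (fun n => ε₀ * r₀ + 1 / ((φ n : ℝ) + 1) + |⟪y - x₀, νs (φ n)⟫|)
        atTop (𝓝 (ε₀ * r₀ + 0 + |⟪y - x₀, ν⟫|)) :=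
      (tendsto_const_nhds.add hone).add (Filter.Tendsto.inner tendsto_const_nhds hconv).abs
    rw [hy0, abs_zero, add_zero, add_zero] at htend
    exact le_of_tendsto_of_tendsto' tendsto_const_nhds htend key


lemma dist_add_le_of_ball_subset (hN : 0 < N) {x x₀ : Euc N} {r r₀ : ℝ}
    (hr : 0 < r) (h : ball x r ⊆ ball x₀ r₀) : dist x x₀ + r ≤ r₀ := by
  by_contra hcon
  push_neg at hcon
  have hx : dist x x₀ < r₀ := mem_ball.1 (h (mem_ball_self hr))
  set t : ℝ := r₀ - dist x x₀ with ht
  have ht0 : 0 < t := by simp only [ht]; linarith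
  have htr : t < r := by simp only [ht]; linarith
  obtain ⟨u, hu1, hu2⟩ : ∃ u : Euc N, ‖u‖ = 1 ∧ dist (x + t • u) x₀ = dist x x₀ + t := by
    rcases eq_or_ne x x₀ with rfl | hne
    · refine ⟨EuclideanSpace.single ⟨0, hN⟩ (1 : ℝ), by simp [EuclideanSpace.norm_single], ?_⟩
      rw [dist_self, zero_add, dist_eq_norm, add_sub_cancel_left, norm_smul,
        EuclideanSpace.norm_single]
      simp [abs_of_pos ht0]
    · set d : Euc N := x - x₀ with hd
      have hd0 : d ≠ 0 := sub_ne_zero.2 hne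
      have hdn : 0 < ‖d‖ := norm_pos_iff.2 hd0
      refine ⟨‖d‖⁻¹ • d, ?_, ?_⟩
      · rw [norm_smul, norm_inv, norm_norm, inv_mul_cancel₀ hdn.ne']
      · rw [dist_eq_norm]
        have he : x + t • ‖d‖⁻¹ • d - x₀ = (1 + t * ‖d‖⁻¹) • d := by
          rw [add_smul, one_smul, smul_smul, hd]; abel
        rw [he, norm_smul, Real.norm_eq_abs, abs_of_pos (by positivity)]
        rw [dist_eq_norm, ← hd]
        field_simp
  have hmem : x + t • u ∈ ball x r := by
    rw [mem_ball, dist_eq_norm, add_sub_cancel_left, norm_smul, hu1, mul_one,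
      Real.norm_eq_abs, abs_of_pos ht0]
    exact htr
  have := mem_ball.1 (h hmem)
  rw [hu2, ht] at this
  linarith

lemma convex_Hset (x₀ w : Euc N) (r₀ s : ℝ) :
    Convex ℝ {y : Euc N | y ∈ ball x₀ r₀ ∧ s < ⟪y - x₀, w⟫} := by
  have he : {y : Euc N | y ∈ ball x₀ r₀ ∧ s < ⟪y - x₀, w⟫} =
      ball x₀ r₀ ∩ {y : Euc N | s + ⟪x₀, w⟫ < ⟪y, w⟫} := by
    ext y
    simp only [Set.mem_setOf_eq, Set.mem_inter_iff, inner_sub_left]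
    constructor
    · rintro ⟨h1, h2⟩; exact ⟨h1, by linarith⟩
    · rintro ⟨h1, h2⟩; exact ⟨h1, by linarith⟩
  rw [he]
  exact (convex_ball x₀ r₀).inter (convex_halfSpace_gt
    ⟨fun a b => inner_add_left a b w, fun c a => real_inner_smul_left a w c⟩ _)


end SepAux

set_option maxHeartbeats 2000000 in
/-- If `K` is `ε₀`-flat and separates in `B(x₀,r₀)`, then it is `1/2`-flat and separates
in every sub-ball `B(x,r) ⊆ B(x₀,r₀)` centred on `K` with `r ≥ 4 ε₀ r₀`. -/
theorem separation_passes_to_subballs (N : ℕ) (hN : 2 ≤ N)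
    (Ω : Set (Euc N)) (hΩ : IsOpen Ω) (K : Set (Euc N)) (hK : RelClosedIn K Ω)
    (x₀ : Euc N) (hx₀ : x₀ ∈ K) (r₀ : ℝ) (hr₀ : 0 < r₀) (hB : ball x₀ r₀ ⊆ Ω)
    (ε₀ : ℝ) (hε₀ : ε₀ ∈ Set.Icc (0 : ℝ) (1 / 2))
    (hβ : flatness K x₀ r₀ ≤ ε₀) (hsep : Separates K x₀ r₀) :
    ∀ x ∈ K ∩ ball x₀ r₀, ∀ r : ℝ, 0 < r → ball x r ⊆ ball x₀ r₀ → 4 * ε₀ * r₀ ≤ r →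
      flatness K x r ≤ 1 / 2 ∧ Separates K x r := by
  intro x hx r hr hsub hr4
  have hN0 : 0 < N := by omega
  set s : ℝ := ε₀ * r₀ with hsdef
  have hs0 : 0 ≤ s := mul_nonneg hε₀.1 hr₀.le
  have h4s : 4 * s ≤ r := by rw [hsdef]; linarith [hr4]
  obtain ⟨ν, hν1, hKslab, hdense⟩ := exists_good_normal hN0 K x₀ hx₀ hr₀ hβ
  have hxK : x ∈ K := hx.1
  have hxB : x ∈ ball x₀ r₀ := hx.2
  have hxslab : |⟪x - x₀, ν⟫| ≤ s := hKslab x hx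
  have hdxr : dist x x₀ + r ≤ r₀ := dist_add_le_of_ball_subset hN0 hr hsub
  -- key inequalities
  have key1 : ∀ y ∈ K ∩ ball x r, |⟪y - x, ν⟫| ≤ 2 * s := by
    intro y hy
    have h1 : |⟪y - x₀, ν⟫| ≤ s := hKslab y ⟨hy.1, hsub hy.2⟩
    have he : ⟪y - x, ν⟫ = ⟪y - x₀, ν⟫ - ⟪x - x₀, ν⟫ := by
      rw [← inner_sub_left]; congr 1; abel
    rw [he]
    calc |⟪y - x₀, ν⟫ - ⟪x - x₀, ν⟫| ≤ |⟪y - x₀, ν⟫| + |⟪x - x₀, ν⟫| := abs_sub _ _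
      _ ≤ 2 * s := by linarith
  have key2 : ∀ y ∈ ball x r, ⟪y - x, ν⟫ = 0 → infDist y K ≤ 2 * s := by
    intro y hyb hy0
    have hyB : y ∈ ball x₀ r₀ := hsub hyb
    set c : ℝ := ⟪y - x₀, ν⟫ with hc
    set y' : Euc N := y - c • ν with hy'
    have h1 : ⟪y' - x₀, ν⟫ = 0 := by
      have he : y' - x₀ = (y - x₀) - c • ν := by rw [hy']; abel
      rw [he, inner_sub_left, real_inner_smul_left, real_inner_self_eq_norm_sq, hν1, hc]
      ring
    have h2 : y' ∈ ball x₀ r₀ := by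
      rw [mem_ball, dist_eq_norm]
      have he : y' - x₀ = (y - x₀) - ⟪y - x₀, ν⟫ • ν := by rw [hy', hc]; abel
      rw [he]
      calc ‖(y - x₀) - ⟪y - x₀, ν⟫ • ν‖ ≤ ‖y - x₀‖ := norm_proj_le hν1 _
        _ < r₀ := by rw [← dist_eq_norm]; exact mem_ball.1 hyB
    have h3 : infDist y' K ≤ s := hdense y' h2 h1
    have h4 : dist y y' = |c| := by
      rw [dist_eq_norm]
      have he : y - y' = c • ν := by rw [hy']; abel
      rw [he, norm_smul, hν1, mul_one, Real.norm_eq_abs]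
    have h5 : |c| ≤ s := by
      have he : c = ⟪y - x, ν⟫ + ⟪x - x₀, ν⟫ := by
        rw [hc, ← inner_add_left]; congr 1; abel
      rw [he, hy0, zero_add]; exact hxslab
    calc infDist y K ≤ infDist y' K + dist y y' := infDist_le_infDist_add_dist
      _ ≤ s + s := by rw [h4]; exact add_le_add h3 h5
      _ = 2 * s := by ring
  -- Part 1 : flatness of the subball
  have hflat : flatness K x r ≤ 1 / 2 := by
    have hIle : (⨅ ν' : {ν' : Euc N // ‖ν'‖ = 1},
        max (⨆ y : ↥(K ∩ ball x r), infDist (y : Euc N) (hplane x ν'.1))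
            (⨆ y : ↥(hplane x ν'.1 ∩ ball x r), infDist (y : Euc N) K)) ≤ 2 * s := by
      have hbdd : BddBelow (Set.range fun ν' : {ν' : Euc N // ‖ν'‖ = 1} =>
          max (⨆ y : ↥(K ∩ ball x r), infDist (y : Euc N) (hplane x ν'.1))
              (⨆ y : ↥(hplane x ν'.1 ∩ ball x r), infDist (y : Euc N) K)) := by
        refine ⟨0, ?_⟩
        rintro _ ⟨w, rfl⟩
        exact le_max_of_le_right (Real.iSup_nonneg fun _ => infDist_nonneg)
      refine ciInf_le_of_le hbdd ⟨ν, hν1⟩ ?_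
      refine max_le (Real.iSup_le (fun y => ?_) (by linarith))
        (Real.iSup_le (fun y => ?_) (by linarith))
      · rw [infDist_hplane hν1]
        exact key1 y y.2
      · exact key2 y y.2.2 y.2.1
    have hstep : flatness K x r ≤ r⁻¹ * (2 * s) :=
      mul_le_mul_of_nonneg_left hIle (inv_nonneg.2 hr.le)
    calc flatness K x r ≤ r⁻¹ * (2 * s) := hstep
      _ ≤ r⁻¹ * (r / 2) := mul_le_mul_of_nonneg_left (by linarith) (inv_nonneg.2 hr.le)
      _ = 1 / 2 := by field_simp
  refine ⟨hflat, ?_⟩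
  -- Part 2 : separation
  by_cases hdeg : r₀ ≤ 4 * s
  · -- degenerate case: x = x₀, r = r₀
    have hd0 : 0 ≤ dist x x₀ := dist_nonneg
    have hrr : r = r₀ := le_antisymm (by linarith) (by linarith)
    have hxx : x = x₀ := by
      have : dist x x₀ = 0 := by linarith
      exact dist_eq_zero.1 this
    rw [hxx, hrr]; exact hsep
  push_neg at hdeg
  obtain ⟨ν₀, hν₀1, hsl₀, hDp, hDm, hCC⟩ := hsep
  set F : Set (Euc N) := ball x₀ r₀ \ K with hF
  set qp : Euc N := x₀ + (3 / 4 * r₀) • ν₀ with hqp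
  set qm : Euc N := x₀ - (3 / 4 * r₀) • ν₀ with hqm
  set Hset : Euc N → Set (Euc N) :=
    fun w => {y : Euc N | y ∈ ball x₀ r₀ ∧ s < ⟪y - x₀, w⟫} with hHset
  -- Hset (σ • ν) avoids K
  have hHF : ∀ σ : ℝ, |σ| = 1 → Hset (σ • ν) ⊆ F := by
    intro σ hσ y hy
    refine ⟨hy.1, fun hyK => ?_⟩
    have h1 : |⟪y - x₀, ν⟫| ≤ s := hKslab y ⟨hyK, hy.1⟩
    have h2 : s < ⟪y - x₀, σ • ν⟫ := hy.2
    rw [real_inner_smul_right] at h2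
    have h3 : |σ * ⟪y - x₀, ν⟫| ≤ s := by rw [abs_mul, hσ, one_mul]; exact h1
    have h4 := le_abs_self (σ * ⟪y - x₀, ν⟫)
    linarith
  -- generic component absorption
  have habsorb : ∀ (w q z : Euc N), z ∈ Hset w → Hset w ⊆ F →
      z ∈ connectedComponentIn F q → Hset w ⊆ connectedComponentIn F q := by
    intro w q z hz hwF hzC
    have hconv := (convex_Hset x₀ w r₀ s).isPreconnected
    have h2 := hconv.subset_connectedComponentIn hz hwF
    rwa [connectedComponentIn_eq hzC]
  set a : ℝ := ⟪ν₀, ν⟫ with ha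
  set σp : ℝ := if 0 ≤ a then 1 else -1 with hσp
  have hσp1 : |σp| = 1 := by rw [hσp]; split_ifs <;> simp
  have hσpa : σp * a = |a| := by
    rw [hσp]; split_ifs with h
    · rw [one_mul, abs_of_nonneg h]
    · rw [neg_one_mul, abs_of_neg (not_le.1 h)]
  set t : ℝ := (s + r₀ / 4) / 2 with htdef
  have hts : s < t := by rw [htdef]; linarith
  have htr : t < r₀ / 4 := by rw [htdef]; linarith
  have ht0 : 0 < t := lt_of_le_of_lt hs0 hts
  -- the probe points
  have hprobe : ∀ (q : Euc N) (σ : ℝ), |σ| = 1 →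
      σ * ⟪q - x₀, ν⟫ = |⟪q - x₀, ν⟫| → dist q x₀ ≤ 3 / 4 * r₀ →
      q + t • (σ • ν) ∈ ball q (r₀ / 4) ∩ Hset (σ • ν) := by
    intro q σ hσ hσq hqball
    have hσsq : σ * σ = 1 := by
      have := abs_mul_abs_self σ
      rw [hσ] at this; linarith
    have hnorm : ‖t • (σ • ν)‖ = t := by
      rw [norm_smul, norm_smul, hν1, mul_one, Real.norm_eq_abs, Real.norm_eq_abs,
        hσ, mul_one, abs_of_pos ht0]
    refine ⟨?_, ?_, ?_⟩
    · rw [mem_ball, dist_eq_norm, add_sub_cancel_left, hnorm]; exact htr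
    · rw [mem_ball]
      calc dist (q + t • (σ • ν)) x₀ ≤ dist (q + t • (σ • ν)) q + dist q x₀ :=
            dist_triangle _ _ _
        _ ≤ t + 3 / 4 * r₀ := by
            rw [dist_eq_norm, add_sub_cancel_left, hnorm]
            exact add_le_add_right hqball t
        _ < r₀ := by linarith
    · show s < ⟪q + t • (σ • ν) - x₀, σ • ν⟫
      have he : q + t • (σ • ν) - x₀ = (q - x₀) + t • (σ • ν) := by abel
      rw [he, inner_add_left, real_inner_smul_right, real_inner_smul_left,
        real_inner_smul_left, real_inner_smul_right, real_inner_self_eq_norm_sq, hν1]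
      rw [hσq]
      have habs : 0 ≤ |⟪q - x₀, ν⟫| := abs_nonneg _
      nlinarith
  -- apply to qp with sign σp
  have hqpsign : σp * ⟪qp - x₀, ν⟫ = |⟪qp - x₀, ν⟫| := by
    have hqpν : ⟪qp - x₀, ν⟫ = 3 / 4 * r₀ * a := by
      rw [hqp, add_sub_cancel_left, real_inner_smul_left, ha]
    rw [hqpν, abs_mul, abs_of_pos (by linarith : (0:ℝ) < 3 / 4 * r₀)]
    calc σp * (3 / 4 * r₀ * a) = 3 / 4 * r₀ * (σp * a) := by ring
      _ = 3 / 4 * r₀ * |a| := by rw [hσpa]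
  have hqpball : dist qp x₀ ≤ 3 / 4 * r₀ := by
    rw [hqp, dist_eq_norm, add_sub_cancel_left, norm_smul, hν₀1, mul_one,
      Real.norm_eq_abs, abs_of_pos (by linarith : (0:ℝ) < 3 / 4 * r₀)]
  obtain ⟨hzpD, hzpH⟩ := hprobe qp σp hσp1 hqpsign hqpball
  -- apply to qm with sign -σp
  have hqmsign : (-σp) * ⟪qm - x₀, ν⟫ = |⟪qm - x₀, ν⟫| := by
    have hqmν : ⟪qm - x₀, ν⟫ = -(3 / 4 * r₀ * a) := by
      have he : qm - x₀ = -((3 / 4 * r₀) • ν₀) := by rw [hqm]; abel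
      rw [he, inner_neg_left, real_inner_smul_left, ha]
    rw [hqmν, abs_neg, abs_mul, abs_of_pos (by linarith : (0:ℝ) < 3 / 4 * r₀)]
    calc (-σp) * -(3 / 4 * r₀ * a) = 3 / 4 * r₀ * (σp * a) := by ring
      _ = 3 / 4 * r₀ * |a| := by rw [hσpa]
  have hσm1 : |(-σp)| = 1 := by rw [abs_neg]; exact hσp1
  have hqmball : dist qm x₀ ≤ 3 / 4 * r₀ := by
    rw [hqm, dist_eq_norm]
    have he : x₀ - (3 / 4 * r₀) • ν₀ - x₀ = -((3 / 4 * r₀) • ν₀) := by abel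
    rw [he, norm_neg, norm_smul, hν₀1, mul_one,
      Real.norm_eq_abs, abs_of_pos (by linarith : (0:ℝ) < 3 / 4 * r₀)]
  obtain ⟨hzmD, hzmH⟩ := hprobe qm (-σp) hσm1 hqmsign hqmball
  -- inclusion of half spaces into components
  have hr4pos : 0 < r₀ / 4 := by linarith
  have hzpC : qp + t • (σp • ν) ∈ posCompo K x₀ r₀ ν₀ := hDp hzpD
  have hzmC : qm + t • ((-σp) • ν) ∈ negCompo K x₀ r₀ ν₀ := hDm hzmD
  have hHpC : Hset (σp • ν) ⊆ posCompo K x₀ r₀ ν₀ :=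
    habsorb _ _ _ hzpH (hHF σp hσp1) hzpC
  have hHmC : Hset ((-σp) • ν) ⊆ negCompo K x₀ r₀ ν₀ :=
    habsorb _ _ _ hzmH (hHF (-σp) hσm1) hzmC
  -- the new normal
  set ν' : Euc N := σp • ν with hν'
  have hν'1 : ‖ν'‖ = 1 := by
    rw [hν', norm_smul, hν1, mul_one, Real.norm_eq_abs, hσp1]
  have hinner' : ∀ v : Euc N, ⟪v, ν'⟫ = σp * ⟪v, ν⟫ := fun v => real_inner_smul_right v ν σp
  have habs' : ∀ v : Euc N, |⟪v, ν'⟫| = |⟪v, ν⟫| := by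
    intro v; rw [hinner', abs_mul, hσp1, one_mul]
  set pp : Euc N := x + (3 / 4 * r) • ν' with hpp
  set pm : Euc N := x - (3 / 4 * r) • ν' with hpm
  have hppx : ⟪pp - x, ν'⟫ = 3 / 4 * r := by
    rw [hpp, add_sub_cancel_left, real_inner_smul_left, real_inner_self_eq_norm_sq, hν'1]
    ring
  have hpmx : ⟪pm - x, ν'⟫ = -(3 / 4 * r) := by
    have he : pm - x = -((3 / 4 * r) • ν') := by rw [hpm]; abel
    rw [he, inner_neg_left, real_inner_smul_left, real_inner_self_eq_norm_sq, hν'1]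
    ring
  have hppball : pp ∈ ball x r := by
    rw [hpp, mem_ball, dist_eq_norm, add_sub_cancel_left, norm_smul, hν'1, mul_one,
      Real.norm_eq_abs, abs_of_pos (by linarith : (0:ℝ) < 3 / 4 * r)]
    linarith
  have hpmball : pm ∈ ball x r := by
    rw [hpm, mem_ball, dist_eq_norm]
    have he : x - (3 / 4 * r) • ν' - x = -((3 / 4 * r) • ν') := by abel
    rw [he, norm_neg, norm_smul, hν'1, mul_one,
      Real.norm_eq_abs, abs_of_pos (by linarith : (0:ℝ) < 3 / 4 * r)]
    linarith
  have hxν' : |⟪x - x₀, ν'⟫| ≤ s := by rw [habs']; exact hxslab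
  have hppH : pp ∈ Hset ν' := by
    refine ⟨hsub hppball, ?_⟩
    show s < ⟪pp - x₀, ν'⟫
    have he : ⟪pp - x₀, ν'⟫ = ⟪pp - x, ν'⟫ + ⟪x - x₀, ν'⟫ := by
      rw [← inner_add_left]; congr 1; abel
    have h1 := neg_abs_le ⟪x - x₀, ν'⟫
    rw [he, hppx]
    have : -s ≤ ⟪x - x₀, ν'⟫ := by linarith [hxν']
    linarith
  have hpmH : pm ∈ Hset (-ν') := by
    refine ⟨hsub hpmball, ?_⟩
    show s < ⟪pm - x₀, -ν'⟫
    rw [inner_neg_right]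
    have he : ⟪pm - x₀, ν'⟫ = ⟪pm - x, ν'⟫ + ⟪x - x₀, ν'⟫ := by
      rw [← inner_add_left]; congr 1; abel
    rw [he, hpmx]
    have h1 := le_abs_self ⟪x - x₀, ν'⟫
    have : ⟪x - x₀, ν'⟫ ≤ s := by linarith [hxν']
    linarith
  have hnegν' : -ν' = (-σp) • ν := by rw [hν', neg_smul]
  have hHpC' : Hset ν' ⊆ posCompo K x₀ r₀ ν₀ := hHpC
  have hHmC' : Hset (-ν') ⊆ negCompo K x₀ r₀ ν₀ := by rw [hnegν']; exact hHmC
  -- pp, pm not in K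
  have hppF : pp ∈ F := hHF σp hσp1 hppH
  have hpmF : pm ∈ F := by
    rw [hnegν'] at hpmH
    exact hHF (-σp) hσm1 hpmH
  have hppF' : pp ∈ ball x r \ K := ⟨hppball, hppF.2⟩
  have hpmF' : pm ∈ ball x r \ K := ⟨hpmball, hpmF.2⟩
  -- the two disks avoid K
  have hdisk : ∀ σ : ℝ, |σ| = 1 → ball (x + (3 / 4 * r) • (σ • ν')) (r / 4) ⊆ ball x r \ K := by
    intro σ hσ y hy
    rw [mem_ball] at hy
    have hσν'1 : ‖σ • ν'‖ = 1 := by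
      rw [norm_smul, hν'1, mul_one, Real.norm_eq_abs, hσ]
    have hd2 : dist (x + (3 / 4 * r) • (σ • ν')) x = 3 / 4 * r := by
      rw [dist_eq_norm, add_sub_cancel_left, norm_smul, hσν'1, mul_one,
        Real.norm_eq_abs, abs_of_pos (by linarith : (0:ℝ) < 3 / 4 * r)]
    have hyx : dist y x < r := by
      calc dist y x ≤ dist y (x + (3 / 4 * r) • (σ • ν')) + dist (x + (3 / 4 * r) • (σ • ν')) x :=
            dist_triangle _ _ _
        _ < r / 4 + 3 / 4 * r := by rw [hd2]; exact add_lt_add_left hy _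
        _ = r := by ring
    refine ⟨mem_ball.2 hyx, fun hyK => ?_⟩
    -- y ∈ K leads to contradiction
    have h1 : |⟪y - x, ν⟫| ≤ 2 * s := key1 y ⟨hyK, mem_ball.2 hyx⟩
    have h2 : |⟪y - x, σ • ν'⟫| ≤ 2 * s := by
      rw [real_inner_smul_right, abs_mul, hσ, one_mul, habs']
      exact h1
    have hsplit : ⟪y - x, σ • ν'⟫
        = ⟪y - (x + (3 / 4 * r) • (σ • ν')), σ • ν'⟫ + 3 / 4 * r := by
      have he : (y - x : Euc N) = (y - (x + (3 / 4 * r) • (σ • ν'))) + (3 / 4 * r) • (σ • ν') := by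
        abel
      rw [he, inner_add_left, real_inner_smul_left, real_inner_self_eq_norm_sq, hσν'1]
      ring
    have h4 : |⟪y - (x + (3 / 4 * r) • (σ • ν')), σ • ν'⟫|
        ≤ ‖y - (x + (3 / 4 * r) • (σ • ν'))‖ := by
      calc |⟪y - (x + (3 / 4 * r) • (σ • ν')), σ • ν'⟫|
          ≤ ‖y - (x + (3 / 4 * r) • (σ • ν'))‖ * ‖σ • ν'‖ := abs_real_inner_le_norm _ _
        _ = ‖y - (x + (3 / 4 * r) • (σ • ν'))‖ := by rw [hσν'1, mul_one]
    have h5 : ‖y - (x + (3 / 4 * r) • (σ • ν'))‖ < r / 4 := by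
      rw [← dist_eq_norm]; exact hy
    have h6 := neg_abs_le ⟪y - (x + (3 / 4 * r) • (σ • ν')), σ • ν'⟫
    have h7 := le_abs_self ⟪y - x, σ • ν'⟫
    linarith
  -- definitional identifications
  have hposdef : posCompo K x r ν' = connectedComponentIn (ball x r \ K) pp := by
    rw [hpp]; rfl
  have hnegdef : negCompo K x r ν' = connectedComponentIn (ball x r \ K) pm := by
    rw [hpm]; rfl
  have hposdef0 : posCompo K x₀ r₀ ν₀ = connectedComponentIn F qp := by
    rw [hqp, hF]; rfl
  have hnegdef0 : negCompo K x₀ r₀ ν₀ = connectedComponentIn F qm := by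
    rw [hqm, hF]; rfl
  refine ⟨ν', hν'1, ?_, ?_, ?_, ?_⟩
  · -- slab condition
    intro y hy
    rw [infDist_hplane hν'1, habs']
    have := key1 y hy
    linarith
  · -- positive disk
    rw [hposdef]
    have hsubF1 : ball (x + (3 / 4 * r) • ν') (r / 4) ⊆ ball x r \ K := by
      have := hdisk 1 (by norm_num)
      rwa [one_smul] at this
    rw [← hpp] at hsubF1 ⊢
    exact (convex_ball pp (r / 4)).isPreconnected.subset_connectedComponentIn
      (mem_ball_self (by linarith)) hsubF1
  · -- negative disk
    rw [hnegdef]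
    have hsubF1 : ball (x + (3 / 4 * r) • ((-1 : ℝ) • ν')) (r / 4) ⊆ ball x r \ K := by
      have := hdisk (-1) (by norm_num)
      exact this
    have hrewr : x + (3 / 4 * r) • ((-1 : ℝ) • ν') = pm := by
      rw [hpm, neg_one_smul, smul_neg, sub_eq_add_neg]
    rw [hrewr] at hsubF1
    exact (convex_ball pm (r / 4)).isPreconnected.subset_connectedComponentIn
      (mem_ball_self (by linarith)) hsubF1
  · -- distinct components
    intro heq
    have e1 : pm ∈ connectedComponentIn (ball x r \ K) pp := by
      rw [← hposdef, heq, hnegdef]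
      exact mem_connectedComponentIn hpmF'
    have e2 : connectedComponentIn (ball x r \ K) pp ⊆ connectedComponentIn F pp :=
      isPreconnected_connectedComponentIn.subset_connectedComponentIn
        (mem_connectedComponentIn hppF')
        ((connectedComponentIn_subset _ _).trans (by rw [hF]; exact diff_subset_diff_left hsub))
    have e3 : pm ∈ connectedComponentIn F pp := e2 e1
    have e4 : pp ∈ posCompo K x₀ r₀ ν₀ := hHpC' hppH
    have e5 : pm ∈ negCompo K x₀ r₀ ν₀ := hHmC' hpmH
    have e7 : connectedComponentIn F qp = connectedComponentIn F pp :=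
      connectedComponentIn_eq (hposdef0 ▸ e4)
    have e8 : pm ∈ connectedComponentIn F qp := e7 ▸ e3
    have e9 : connectedComponentIn F qp = connectedComponentIn F pm := connectedComponentIn_eq e8
    have e10 : connectedComponentIn F qm = connectedComponentIn F pm :=
      connectedComponentIn_eq (hnegdef0 ▸ e5)
    exact hCC (by rw [hposdef0, hnegdef0, e9, e10])
end

section
/- The separating property does not depend on the particular hyperplane: let K be relatively closed in an open set Ω ⊆ ℝ^N, x₀ ∈ K, r₀ > 0 with B(x₀,r₀) ⊆ Ω. Suppose K separates in B(x₀,r₀) with respect to an affine hyperplane P through x₀ (i.e. K ∩ B(x₀,r₀) ⊆ { y : dist(y,P) ≤ r₀/2 } and the two balls B(x₀ ± (3/4) r₀ ν_P, r₀/4), where ν_P is a unit normal to P, lie in distinct connected components of B(x₀,r₀) \ K). If Q is another affine hyperplane through x₀ satisfying K ∩ B(x₀,r₀) ⊆ { y ∈ B(x₀,r₀) : dist(y,Q) ≤ r₀/2 }, then K also separates in B(x₀,r₀) with respect to Q, i.e. the two balls B(x₀ ± (3/4) r₀ ν_Q, r₀/4), with ν_Q a unit normal to Q, lie in distinct connected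 components of B(x₀,r₀) \ K. -/
open Metric MeasureTheory Set Filter
open scoped RealInnerProductSpace ENNReal NNReal Topology

section SepHelpers

variable {N : ℕ}

lemma cap_subset_posCompo (K : Set (Euc N)) (x₀ : Euc N) (r₀ : ℝ) (hr₀ : 0 < r₀)
    (ν : Euc N) (hν : ‖ν‖ = 1)
    (hstrip : ∀ y ∈ K ∩ ball x₀ r₀, infDist y (hplane x₀ ν) ≤ r₀ / 2) :
    {y : Euc N | dist y x₀ < r₀ ∧ r₀ / 2 < ⟪y - x₀, ν⟫} ⊆ posCompo K x₀ r₀ ν := by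
  have hset : {y : Euc N | dist y x₀ < r₀ ∧ r₀ / 2 < ⟪y - x₀, ν⟫}
      = ball x₀ r₀ ∩ {y : Euc N | r₀ / 2 + ⟪x₀, ν⟫ < ⟪y, ν⟫} := by
    ext y
    simp only [Set.mem_setOf_eq, Set.mem_inter_iff, mem_ball, inner_sub_left]
    constructor <;> rintro ⟨h1, h2⟩ <;> exact ⟨h1, by linarith⟩
  have hlin : IsLinearMap ℝ (fun y : Euc N => ⟪y, ν⟫) :=
    ⟨fun a b => inner_add_left a b ν, fun c a => by
      simp [real_inner_smul_left, Finset.mul_sum, mul_assoc]⟩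
  have hconv : Convex ℝ {y : Euc N | dist y x₀ < r₀ ∧ r₀ / 2 < ⟪y - x₀, ν⟫} := by
    rw [hset]
    exact (convex_ball x₀ r₀).inter (convex_halfSpace_gt hlin _)
  have hsub : {y : Euc N | dist y x₀ < r₀ ∧ r₀ / 2 < ⟪y - x₀, ν⟫} ⊆ ball x₀ r₀ \ K := by
    rintro y ⟨h1, h2⟩
    refine ⟨mem_ball.mpr h1, fun hyK => ?_⟩
    have h3 : infDist y (hplane x₀ ν) ≤ r₀ / 2 := hstrip y ⟨hyK, mem_ball.mpr h1⟩
    have hne : (hplane x₀ ν).Nonempty := ⟨x₀, by simp [hplane]⟩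
    have h4 : infDist y (hplane x₀ ν) < ⟪y - x₀, ν⟫ := lt_of_le_of_lt h3 h2
    obtain ⟨p, hp, hdp⟩ := (infDist_lt_iff hne).mp h4
    have hp0 : ⟪p - x₀, ν⟫ = 0 := hp
    have hip : ⟪y - x₀, ν⟫ = ⟪y - p, ν⟫ := by
      have : ⟪y - x₀, ν⟫ - ⟪y - p, ν⟫ = ⟪p - x₀, ν⟫ := by
        rw [← inner_sub_left]; congr 1; abel
      linarith [this, hp0]
    have hcs : |⟪y - p, ν⟫| ≤ ‖y - p‖ * ‖ν‖ := abs_real_inner_le_norm _ _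
    rw [hν, mul_one] at hcs
    have : ⟪y - x₀, ν⟫ ≤ dist y p := by
      rw [hip, dist_eq_norm]; exact le_trans (le_abs_self _) hcs
    linarith
  have hmem : x₀ + (3 / 4 * r₀) • ν ∈
      {y : Euc N | dist y x₀ < r₀ ∧ r₀ / 2 < ⟪y - x₀, ν⟫} := by
    constructor
    · rw [dist_eq_norm, add_sub_cancel_left, norm_smul, hν, mul_one, Real.norm_eq_abs,
        abs_of_nonneg (by linarith : (0:ℝ) ≤ 3 / 4 * r₀)]
      linarith
    · rw [add_sub_cancel_left, real_inner_smul_left, real_inner_self_eq_norm_sq, hν]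
      nlinarith
  exact hconv.isPreconnected.subset_connectedComponentIn hmem hsub

lemma hplane_neg (x ν : Euc N) : hplane x (-ν) = hplane x ν := by
  ext y; simp [hplane]

lemma posCompo_neg (K : Set (Euc N)) (x₀ : Euc N) (r₀ : ℝ) (ν : Euc N) :
    posCompo K x₀ r₀ (-ν) = negCompo K x₀ r₀ ν := by
  unfold posCompo negCompo
  rw [smul_neg, ← sub_eq_add_neg]

lemma cap_subset_negCompo (K : Set (Euc N)) (x₀ : Euc N) (r₀ : ℝ) (hr₀ : 0 < r₀)
    (ν : Euc N) (hν : ‖ν‖ = 1)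
    (hstrip : ∀ y ∈ K ∩ ball x₀ r₀, infDist y (hplane x₀ ν) ≤ r₀ / 2) :
    {y : Euc N | dist y x₀ < r₀ ∧ ⟪y - x₀, ν⟫ < -(r₀ / 2)} ⊆ negCompo K x₀ r₀ ν := by
  rw [← posCompo_neg]
  have hstrip' : ∀ y ∈ K ∩ ball x₀ r₀, infDist y (hplane x₀ (-ν)) ≤ r₀ / 2 := by
    intro y hy; rw [hplane_neg]; exact hstrip y hy
  have := cap_subset_posCompo K x₀ r₀ hr₀ (-ν) (by rwa [norm_neg]) hstrip'
  intro y hy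
  refine this ⟨hy.1, ?_⟩
  rw [inner_neg_right]
  linarith [hy.2]

lemma compo_eq_posCompo (K : Set (Euc N)) (x₀ : Euc N) (r₀ : ℝ) (hr₀ : 0 < r₀)
    (ν : Euc N) (hν : ‖ν‖ = 1)
    (hstrip : ∀ y ∈ K ∩ ball x₀ r₀, infDist y (hplane x₀ ν) ≤ r₀ / 2)
    (z : Euc N) (hz1 : dist z x₀ < r₀) (hz2 : r₀ / 2 < ⟪z - x₀, ν⟫) :
    connectedComponentIn (ball x₀ r₀ \ K) z = posCompo K x₀ r₀ ν :=
  (connectedComponentIn_eq (cap_subset_posCompo K x₀ r₀ hr₀ ν hν hstrip ⟨hz1, hz2⟩)).symm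

lemma compo_eq_negCompo (K : Set (Euc N)) (x₀ : Euc N) (r₀ : ℝ) (hr₀ : 0 < r₀)
    (ν : Euc N) (hν : ‖ν‖ = 1)
    (hstrip : ∀ y ∈ K ∩ ball x₀ r₀, infDist y (hplane x₀ ν) ≤ r₀ / 2)
    (z : Euc N) (hz1 : dist z x₀ < r₀) (hz2 : ⟪z - x₀, ν⟫ < -(r₀ / 2)) :
    connectedComponentIn (ball x₀ r₀ \ K) z = negCompo K x₀ r₀ ν :=
  (connectedComponentIn_eq (cap_subset_negCompo K x₀ r₀ hr₀ ν hν hstrip ⟨hz1, hz2⟩)).symm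

lemma ball_subset_posCompo (K : Set (Euc N)) (x₀ : Euc N) (r₀ : ℝ) (hr₀ : 0 < r₀)
    (ν : Euc N) (hν : ‖ν‖ = 1)
    (hstrip : ∀ y ∈ K ∩ ball x₀ r₀, infDist y (hplane x₀ ν) ≤ r₀ / 2) :
    ball (x₀ + (3 / 4 * r₀) • ν) (r₀ / 4) ⊆ posCompo K x₀ r₀ ν := by
  intro y hy
  rw [mem_ball, dist_eq_norm] at hy
  refine cap_subset_posCompo K x₀ r₀ hr₀ ν hν hstrip ⟨?_, ?_⟩
  · have h2 : dist (x₀ + (3 / 4 * r₀) • ν) x₀ = 3 / 4 * r₀ := by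
      rw [dist_eq_norm, add_sub_cancel_left, norm_smul, hν, mul_one, Real.norm_eq_abs,
        abs_of_nonneg (by linarith : (0:ℝ) ≤ 3 / 4 * r₀)]
    have h1 := dist_triangle y (x₀ + (3 / 4 * r₀) • ν) x₀
    rw [h2] at h1
    have h3 : dist y (x₀ + (3 / 4 * r₀) • ν) < r₀ / 4 := by rw [dist_eq_norm]; exact hy
    linarith
  · have hsplit : y - x₀ = (y - (x₀ + (3 / 4 * r₀) • ν)) + (3 / 4 * r₀) • ν := by abel
    rw [hsplit, inner_add_left, real_inner_smul_left, real_inner_self_eq_norm_sq, hν]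
    have hcs : |⟪y - (x₀ + (3 / 4 * r₀) • ν), ν⟫| ≤ ‖y - (x₀ + (3 / 4 * r₀) • ν)‖ * ‖ν‖ :=
      abs_real_inner_le_norm _ _
    rw [hν, mul_one] at hcs
    have := neg_abs_le (⟪y - (x₀ + (3 / 4 * r₀) • ν), ν⟫)
    nlinarith

lemma ball_subset_negCompo (K : Set (Euc N)) (x₀ : Euc N) (r₀ : ℝ) (hr₀ : 0 < r₀)
    (ν : Euc N) (hν : ‖ν‖ = 1)
    (hstrip : ∀ y ∈ K ∩ ball x₀ r₀, infDist y (hplane x₀ ν) ≤ r₀ / 2) :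
    ball (x₀ - (3 / 4 * r₀) • ν) (r₀ / 4) ⊆ negCompo K x₀ r₀ ν := by
  rw [← posCompo_neg]
  have hstrip' : ∀ y ∈ K ∩ ball x₀ r₀, infDist y (hplane x₀ (-ν)) ≤ r₀ / 2 := by
    intro y hy; rw [hplane_neg]; exact hstrip y hy
  have := ball_subset_posCompo K x₀ r₀ hr₀ (-ν) (by rwa [norm_neg]) hstrip'
  rw [smul_neg, ← sub_eq_add_neg] at this
  exact this

end SepHelpers

/-- The separating property does not depend on the particular hyperplane: if `K` separates in
`B(x₀,r₀)` with respect to a hyperplane `P` through `x₀`, and `Q` is another hyperplane through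
`x₀` such that `K ∩ B(x₀,r₀)` lies in the strip of half-width `r₀/2` around `Q`, then `K` also
separates with respect to `Q`. -/
theorem separates_independent_of_hyperplane (N : ℕ) (hN : 2 ≤ N)
    (Ω : Set (Euc N)) (hΩ : IsOpen Ω) (K : Set (Euc N)) (hK : RelClosedIn K Ω)
    (x₀ : Euc N) (hx₀ : x₀ ∈ K) (r₀ : ℝ) (hr₀ : 0 < r₀) (hB : ball x₀ r₀ ⊆ Ω)
    (νP : Euc N) (hsepP : SeparatesWith K x₀ r₀ νP)
    (νQ : Euc N) (hνQ : ‖νQ‖ = 1)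
    (hQ : ∀ y ∈ K ∩ ball x₀ r₀, infDist y (hplane x₀ νQ) ≤ r₀ / 2) :
    SeparatesWith K x₀ r₀ νQ := by
  obtain ⟨hνP, hstripP, _hposP, _hnegP, hneP⟩ := hsepP
  set c : ℝ := ⟪νQ, νP⟫ with hc
  set s : ℝ := if 0 ≤ c then 1 else -1 with hs
  have hs2 : s * s = 1 := by rw [hs]; split_ifs <;> norm_num
  have hsc : 0 ≤ s * c := by
    rw [hs]; split_ifs with h
    · simpa using h
    · push_neg at h; nlinarith
  set t : ℝ := 3 / 5 * r₀ with ht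
  have ht0 : 0 < t := by rw [ht]; linarith
  set d : ℝ := 1 + s * c with hd
  have hd1 : 1 ≤ d := by rw [hd]; linarith
  have hd0 : d ≠ 0 := by linarith
  set v : Euc N := (t / d) • (νQ + s • νP) with hv
  have hQQ : ⟪νQ, νQ⟫ = 1 := by rw [real_inner_self_eq_norm_sq, hνQ]; norm_num
  have hPP : ⟪νP, νP⟫ = 1 := by rw [real_inner_self_eq_norm_sq, hνP]; norm_num
  have hPQ : ⟪νP, νQ⟫ = c := by rw [hc, real_inner_comm]
  have key : c + s = s * d := by rw [hd]; linear_combination (-c) * hs2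
  have hvq : ⟪v, νQ⟫ = t := by
    rw [hv, real_inner_smul_left, inner_add_left, real_inner_smul_left, hQQ, hPQ, ← hd]
    field_simp
  have hvp : ⟪v, νP⟫ = s * t := by
    rw [hv, real_inner_smul_left, inner_add_left, real_inner_smul_left, hPP, ← hc]
    field_simp
    linear_combination key
  have hvnorm : ‖v‖ < r₀ := by
    have hvv : ⟪v, v⟫ = 2 * t ^ 2 / d := by
      rw [hv, real_inner_smul_left, real_inner_smul_right, inner_add_left, inner_add_right,
        inner_add_right, real_inner_smul_left, real_inner_smul_left, real_inner_smul_right,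
        real_inner_smul_right, hQQ, hPP, hPQ, ← hc]
      field_simp
      linear_combination hs2 - 2 * hd
    have h1 : ‖v‖ ^ 2 = 2 * t ^ 2 / d := by rw [← real_inner_self_eq_norm_sq, hvv]
    have h2 : 2 * t ^ 2 / d ≤ 2 * t ^ 2 := by
      apply div_le_self (by positivity) hd1
    have h3 : ‖v‖ ^ 2 < r₀ ^ 2 := by
      rw [h1, ht] at *
      nlinarith
    nlinarith [norm_nonneg v]
  have hdistp : dist (x₀ + v) x₀ < r₀ := by
    rw [dist_eq_norm, add_sub_cancel_left]; exact hvnorm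
  have hdistm : dist (x₀ - v) x₀ < r₀ := by
    rw [dist_eq_norm, sub_sub_cancel_left, norm_neg]; exact hvnorm
  have hip : ⟪x₀ + v - x₀, νQ⟫ = t := by rw [add_sub_cancel_left]; exact hvq
  have him : ⟪x₀ - v - x₀, νQ⟫ = -t := by
    rw [sub_sub_cancel_left, inner_neg_left, hvq]
  have hipP : ⟪x₀ + v - x₀, νP⟫ = s * t := by rw [add_sub_cancel_left]; exact hvp
  have himP : ⟪x₀ - v - x₀, νP⟫ = -(s * t) := by
    rw [sub_sub_cancel_left, inner_neg_left, hvp]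
  have htgt : r₀ / 2 < t := by rw [ht]; linarith
  have hQpos : connectedComponentIn (ball x₀ r₀ \ K) (x₀ + v) = posCompo K x₀ r₀ νQ :=
    compo_eq_posCompo K x₀ r₀ hr₀ νQ hνQ hQ _ hdistp (by rw [hip]; exact htgt)
  have hQneg : connectedComponentIn (ball x₀ r₀ \ K) (x₀ - v) = negCompo K x₀ r₀ νQ :=
    compo_eq_negCompo K x₀ r₀ hr₀ νQ hνQ hQ _ hdistm (by rw [him]; linarith)
  have hne : posCompo K x₀ r₀ νQ ≠ negCompo K x₀ r₀ νQ := by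
    rcases (show s = 1 ∨ s = -1 by rw [hs]; split_ifs <;> norm_num) with hs1 | hs1
    · have hPpos : connectedComponentIn (ball x₀ r₀ \ K) (x₀ + v) = posCompo K x₀ r₀ νP :=
        compo_eq_posCompo K x₀ r₀ hr₀ νP hνP hstripP _ hdistp
          (by rw [hipP, hs1, one_mul]; exact htgt)
      have hPneg : connectedComponentIn (ball x₀ r₀ \ K) (x₀ - v) = negCompo K x₀ r₀ νP :=
        compo_eq_negCompo K x₀ r₀ hr₀ νP hνP hstripP _ hdistm
          (by rw [himP, hs1, one_mul]; linarith)
      rw [← hQpos, ← hQneg, hPpos, hPneg]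
      exact hneP
    · have hPneg : connectedComponentIn (ball x₀ r₀ \ K) (x₀ + v) = negCompo K x₀ r₀ νP :=
        compo_eq_negCompo K x₀ r₀ hr₀ νP hνP hstripP _ hdistp
          (by rw [hipP, hs1]; linarith)
      have hPpos : connectedComponentIn (ball x₀ r₀ \ K) (x₀ - v) = posCompo K x₀ r₀ νP :=
        compo_eq_posCompo K x₀ r₀ hr₀ νP hνP hstripP _ hdistm
          (by rw [himP, hs1]; linarith)
      rw [← hQpos, ← hQneg, hPneg, hPpos]
      exact hneP.symm
  exact ⟨hνQ, hQ, ball_subset_posCompo K x₀ r₀ hr₀ νQ hνQ hQ,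
    ball_subset_negCompo K x₀ r₀ hr₀ νQ hνQ hQ, hne⟩
end

section
/- Equivalence of unilateral and bilateral flatness for separating sets: let K be relatively closed in an open set Ω ⊆ ℝ^N, x₀ ∈ K, r₀ > 0 with B(x₀,r₀) ⊆ Ω. Suppose there exist ε ∈ (0,1/2] and an affine hyperplane P through x₀ such that K ∩ B(x₀,r₀) ⊆ { y ∈ B(x₀,r₀) : dist(y,P) ≤ ε r₀ }, and suppose K separates in B(x₀,r₀). Then P ∩ B(x₀,r₀) ⊆ { y : dist(y,K) ≤ 2 ε r₀ }. -/
open Metric MeasureTheory Set Filter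
open scoped RealInnerProductSpace ENNReal NNReal Topology

section AuxProof
open Metric Set
open scoped RealInnerProductSpace

variable {N : ℕ}

private lemma aux_inner_linear (w : Euc N) :
    IsLinearMap ℝ (fun z : Euc N => (inner ℝ z w : ℝ)) :=
  ⟨fun a b => inner_add_left a b w, fun r a => by
    simp only [real_inner_smul_left, smul_eq_mul]⟩

private lemma aux_convex_gt (x₀ w : Euc N) (c : ℝ) :
    Convex ℝ {z : Euc N | c < (inner ℝ (z - x₀) w : ℝ)} := by
  have h : {z : Euc N | c < (inner ℝ (z - x₀) w : ℝ)}
      = {z : Euc N | c + (inner ℝ x₀ w : ℝ) < (inner ℝ z w : ℝ)} := by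
    ext z
    simp only [Set.mem_setOf_eq, inner_sub_left]
    constructor <;> intro h <;> linarith
  rw [h]
  exact convex_halfSpace_gt (aux_inner_linear w) _

private lemma aux_convex_lt (x₀ w : Euc N) (c : ℝ) :
    Convex ℝ {z : Euc N | (inner ℝ (z - x₀) w : ℝ) < c} := by
  have h : {z : Euc N | (inner ℝ (z - x₀) w : ℝ) < c}
      = {z : Euc N | (inner ℝ z w : ℝ) < c + (inner ℝ x₀ w : ℝ)} := by
    ext z
    simp only [Set.mem_setOf_eq, inner_sub_left]
    constructor <;> intro h <;> linarith
  rw [h]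
  exact convex_halfSpace_lt (aux_inner_linear w) _

private lemma aux_abs_inner_le_infDist (x₀ w z : Euc N) (hw : ‖w‖ = 1) :
    |(inner ℝ (z - x₀) w : ℝ)| ≤ infDist z (hplane x₀ w) := by
  by_contra h
  push_neg at h
  have hne : (hplane x₀ w).Nonempty := ⟨x₀, by simp [hplane]⟩
  obtain ⟨p, hp, hd⟩ := (infDist_lt_iff hne).1 h
  have hp0 : (inner ℝ (p - x₀) w : ℝ) = 0 := hp
  have h1 : (inner ℝ (z - x₀) w : ℝ) = inner ℝ (z - p) w := by
    have hzz : z - x₀ = z - p + (p - x₀) := by abel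
    rw [hzz, inner_add_left, hp0, add_zero]
  have h2 : |(inner ℝ (z - p) w : ℝ)| ≤ dist z p :=
    calc |(inner ℝ (z - p) w : ℝ)| ≤ ‖z - p‖ * ‖w‖ := abs_real_inner_le_norm _ _
      _ = dist z p := by rw [hw, mul_one, dist_eq_norm]
  rw [h1] at hd
  linarith

private lemma aux_compo_eq {W S : Set (Euc N)} (hW : IsPreconnected W) (hWS : W ⊆ S)
    {p q : Euc N} (hp : p ∈ W) (hq : q ∈ W) :
    connectedComponentIn S p = connectedComponentIn S q :=
  connectedComponentIn_eq (hW.subset_connectedComponentIn hp hWS hq)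

end AuxProof

section AuxScalar

private lemma sc_norm_lt (x r : ℝ) (hx : 0 ≤ x) (hr : 0 < r) (h : x ^ 2 < r ^ 2) : x < r := by
  nlinarith

private lemma sc_norm_le (x d : ℝ) (hx : 0 ≤ x) (hd : 0 ≤ d) (h : x ^ 2 ≤ d ^ 2) : x ≤ d := by
  nlinarith

private lemma sc_sq_le (t s : ℝ) (h : |t| ≤ s) : t ^ 2 ≤ s ^ 2 := by
  nlinarith [abs_nonneg t, sq_abs t]

private lemma sc_wle (w : ℝ) (h0 : 0 ≤ w) (h : w ^ 2 ≤ 1) : w ≤ 1 := by nlinarith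

private lemma sc_sum1 (a w : ℝ) (ha : 0 ≤ a) (ha1 : a ≤ 1) (hw : 0 ≤ w) (hw1 : w ≤ 1)
    (h : w ^ 2 = 1 - a ^ 2) : 1 ≤ a + w := by
  nlinarith [mul_nonneg ha (by linarith : (0:ℝ) ≤ 1 - a),
    mul_nonneg hw (by linarith : (0:ℝ) ≤ 1 - w)]

private lemma sc_scale (a b w : ℝ) (ha : 0 ≤ a) (h : 1 ≤ b + w) : a ≤ a * b + a * w := by
  nlinarith [mul_nonneg ha (by linarith : (0:ℝ) ≤ b + w - 1)]

private lemma sc1 (ε r₀ R : ℝ) (hε0 : 0 < ε) (hε2 : ε ≤ 1 / 2) (hr₀ : 0 < r₀) (hR0 : 0 ≤ R)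
    (hRr : R < r₀) :
    (max 0 (R - Real.sqrt 7 / 2 * (ε * r₀))) ^ 2 + (3 / 2 * (ε * r₀)) ^ 2 < r₀ ^ 2 := by
  have h7 : Real.sqrt 7 ^ 2 = 7 := Real.sq_sqrt (by norm_num)
  have h72 : 2 < Real.sqrt 7 := by nlinarith [Real.sqrt_nonneg 7]
  have hE : 0 < ε * r₀ := mul_pos hε0 hr₀
  have h7P : Real.sqrt 7 ^ 2 * (ε * r₀) ^ 2 = 7 * (ε * r₀) ^ 2 := by rw [h7]
  have hεsq : ε ^ 2 ≤ 1 / 4 := by nlinarith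
  by_cases hcase : R - Real.sqrt 7 / 2 * (ε * r₀) ≤ 0
  · rw [max_eq_left hcase]
    nlinarith [hεsq, mul_pos hr₀ hr₀]
  · push_neg at hcase
    rw [max_eq_right hcase.le]
    have k1 : 0 < r₀ - R := by linarith
    have k2 : 0 < R + r₀ - Real.sqrt 7 * (ε * r₀) := by linarith
    have k3 : 0 < Real.sqrt 7 * (ε * r₀) * r₀ - 4 * (ε * r₀) ^ 2 := by
      have hE2 : 0 ≤ r₀ - 2 * (ε * r₀) := by
        nlinarith [mul_nonneg hr₀.le (by linarith : (0:ℝ) ≤ 1 - 2 * ε)]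
      nlinarith [mul_nonneg hE2 hE.le,
        mul_pos (by linarith : (0:ℝ) < Real.sqrt 7 - 2) (mul_pos hE hr₀)]
    nlinarith [mul_pos k1 k2, k3, h7P]

private lemma sc2 (ε r₀ R : ℝ) (hε0 : 0 < ε) (hr₀ : 0 < r₀) (hR0 : 0 ≤ R) :
    (R - max 0 (R - Real.sqrt 7 / 2 * (ε * r₀))) ^ 2 + (3 / 2 * (ε * r₀)) ^ 2
      ≤ (2 * (ε * r₀)) ^ 2 := by
  have h7 : Real.sqrt 7 ^ 2 = 7 := Real.sq_sqrt (by norm_num)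
  set c := Real.sqrt 7 / 2 * (ε * r₀) with hc
  have hc0 : 0 ≤ c := by rw [hc]; positivity
  have hmR : max 0 (R - c) ≤ R := max_le hR0 (by linarith)
  have hRm : R - c ≤ max 0 (R - c) := le_max_right _ _
  have k4 : 0 ≤ (c - (R - max 0 (R - c))) * (c + (R - max 0 (R - c))) :=
    mul_nonneg (by linarith) (by linarith)
  have hc2 : c ^ 2 = 7 / 4 * (ε * r₀) ^ 2 := by rw [hc, mul_pow, div_pow, h7]; ring
  nlinarith [k4, hc2]

end AuxScalar

set_option maxHeartbeats 1000000 in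
/-- Equivalence of unilateral and bilateral flatness for separating sets: if
`K ∩ B(x₀,r₀)` lies in the strip of half-width `ε r₀` around a hyperplane `P` through `x₀`
and `K` separates in `B(x₀,r₀)`, then every point of `P ∩ B(x₀,r₀)` is at distance at most
`2 ε r₀` from `K`. -/
theorem unilateral_bilateral_flatness (N : ℕ) (hN : 2 ≤ N)
    (Ω : Set (Euc N)) (hΩ : IsOpen Ω) (K : Set (Euc N)) (hK : RelClosedIn K Ω)
    (x₀ : Euc N) (hx₀ : x₀ ∈ K) (r₀ : ℝ) (hr₀ : 0 < r₀) (hB : ball x₀ r₀ ⊆ Ω)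
    (ε : ℝ) (hε : ε ∈ Set.Ioc (0 : ℝ) (1 / 2)) (ν : Euc N) (hν : ‖ν‖ = 1)
    (hstrip : ∀ y ∈ K ∩ ball x₀ r₀, infDist y (hplane x₀ ν) ≤ ε * r₀)
    (hsep : Separates K x₀ r₀) :
    ∀ y ∈ hplane x₀ ν ∩ ball x₀ r₀, infDist y K ≤ 2 * ε * r₀ := by
  classical
  obtain ⟨ν', hν'1, hν'strip, -, -, hne⟩ := hsep
  obtain ⟨hε0, hε2⟩ := hε
  intro y hy
  by_contra hcon
  push_neg at hcon
  obtain ⟨hyP, hyB⟩ := hy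
  have hyP' : (inner ℝ (y - x₀) ν : ℝ) = 0 := hyP
  have hνν : (inner ℝ ν ν : ℝ) = 1 := by rw [real_inner_self_eq_norm_sq, hν]; norm_num
  have hνν' : (inner ℝ ν' ν' : ℝ) = 1 := by rw [real_inner_self_eq_norm_sq, hν'1]; norm_num
  have hKν : ∀ z, z ∈ K → z ∈ ball x₀ r₀ → |(inner ℝ (z - x₀) ν : ℝ)| ≤ ε * r₀ := fun z h1 h2 =>
    le_trans (aux_abs_inner_le_infDist x₀ ν z hν) (hstrip z ⟨h1, h2⟩)
  have hKν' : ∀ z, z ∈ K → z ∈ ball x₀ r₀ → |(inner ℝ (z - x₀) ν' : ℝ)| ≤ r₀ / 2 := fun z h1 h2 =>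
    le_trans (aux_abs_inner_le_infDist x₀ ν' z hν'1) (hν'strip z ⟨h1, h2⟩)
  have hE : 0 < ε * r₀ := mul_pos hε0 hr₀
  have hE2 : 2 * (ε * r₀) ≤ r₀ := by
    nlinarith [mul_nonneg hr₀.le (by linarith : (0:ℝ) ≤ 1 - 2 * ε)]
  have hdK : 2 * (ε * r₀) < infDist y K := by linarith
  set R := ‖y - x₀‖ with hRdef
  have hR0 : (0:ℝ) ≤ R := norm_nonneg _
  have hRr : R < r₀ := by rw [hRdef, ← dist_eq_norm]; exact mem_ball.1 hyB
  set c := Real.sqrt 7 / 2 * (ε * r₀) with hcdef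
  have hc0 : 0 < c := by rw [hcdef]; positivity
  set m := max 0 (R - c) with hmdef
  have hm0 : 0 ≤ m := le_max_left _ _
  have hmR : m ≤ R := max_le hR0 (by linarith)
  have hRmc : R - m ≤ c := by
    have h := le_max_right 0 (R - c)
    rw [← hmdef] at h
    linarith
  -- main scalar bounds
  have hG1 : m ^ 2 + (3 / 2 * (ε * r₀)) ^ 2 < r₀ ^ 2 := by
    rw [hmdef, hcdef]
    exact sc1 ε r₀ R hε0 hε2 hr₀ hR0 hRr
  have hG2 : (R - m) ^ 2 + (3 / 2 * (ε * r₀)) ^ 2 ≤ (2 * (ε * r₀)) ^ 2 := by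
    rw [hmdef, hcdef]
    exact sc2 ε r₀ R hε0 hr₀ hR0
  -- the vector q
  set q : Euc N := (R⁻¹ * m) • (y - x₀) with hqdef
  have hqν : (inner ℝ q ν : ℝ) = 0 := by rw [hqdef, real_inner_smul_left, hyP', mul_zero]
  have hqn : ‖q‖ = m := by
    rcases eq_or_lt_of_le hR0 with h0 | h0
    · have hy0 : y - x₀ = 0 := by rw [← norm_eq_zero, ← hRdef, ← h0]
      have hm' : m = 0 := by rw [hmdef, max_eq_left (by linarith)]
      rw [hqdef, hy0, smul_zero, norm_zero, hm']
    · rw [hqdef, norm_smul, ← hRdef, Real.norm_eq_abs,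
        abs_of_nonneg (mul_nonneg (inv_nonneg.2 hR0) hm0)]
      field_simp
  have hqyn : ‖q - (y - x₀)‖ = R - m := by
    have hrepr : q - (y - x₀) = (R⁻¹ * m - 1) • (y - x₀) := by
      rw [hqdef, sub_smul, one_smul]
    rcases eq_or_lt_of_le hR0 with h0 | h0
    · have hy0 : y - x₀ = 0 := by rw [← norm_eq_zero, ← hRdef, ← h0]
      have hm' : m = 0 := by rw [hmdef, max_eq_left (by linarith)]
      rw [hrepr, hy0, smul_zero, norm_zero, hm', ← h0, sub_zero]
    · have hle : R⁻¹ * m - 1 ≤ 0 := by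
        rw [sub_nonpos]
        calc R⁻¹ * m ≤ R⁻¹ * R := mul_le_mul_of_nonneg_left hmR (inv_nonneg.2 hR0)
          _ = 1 := by field_simp
      rw [hrepr, norm_smul, ← hRdef, Real.norm_eq_abs, abs_of_nonpos hle]
      field_simp
      ring
  have hqyν : (inner ℝ (q - (y - x₀)) ν : ℝ) = 0 := by
    rw [inner_sub_left, hqν, hyP', sub_zero]
  -- segment points are in S
  have hseg : ∀ t : ℝ, |t| ≤ 3 / 2 * (ε * r₀) → (x₀ + q + t • ν) ∈ ball x₀ r₀ \ K := by
    intro t ht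
    have htt : t ^ 2 ≤ (3 / 2 * (ε * r₀)) ^ 2 := sc_sq_le t _ ht
    have htν : ‖t • ν‖ ^ 2 = t ^ 2 := by
      rw [norm_smul, hν, mul_one, Real.norm_eq_abs, sq_abs]
    constructor
    · rw [mem_ball, dist_eq_norm]
      have hvx : x₀ + q + t • ν - x₀ = q + t • ν := by abel
      rw [hvx]
      have hnx : ‖q + t • ν‖ ^ 2 = m ^ 2 + t ^ 2 := by
        rw [norm_add_sq_real, real_inner_smul_right, hqν, mul_zero, hqn, htν]
        ring
      have h1 : ‖q + t • ν‖ ^ 2 < r₀ ^ 2 := by rw [hnx]; linarith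
      exact sc_norm_lt _ _ (norm_nonneg _) hr₀ h1
    · intro hzK
      have hvy : x₀ + q + t • ν - y = q - (y - x₀) + t • ν := by abel
      have hny : ‖x₀ + q + t • ν - y‖ ^ 2 = (R - m) ^ 2 + t ^ 2 := by
        rw [hvy, norm_add_sq_real, real_inner_smul_right, hqyν, mul_zero, hqyn, htν]
        ring
      have hdy : dist y (x₀ + q + t • ν) ≤ 2 * (ε * r₀) := by
        rw [dist_eq_norm, norm_sub_rev]
        have h2 : ‖x₀ + q + t • ν - y‖ ^ 2 ≤ (2 * (ε * r₀)) ^ 2 := by rw [hny]; linarith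
        exact sc_norm_le _ _ (norm_nonneg _) (by linarith) h2
      have := infDist_le_dist_of_mem (x := y) hzK
      linarith
  -- endpoints of the segment
  set zp : Euc N := x₀ + q + (3 / 2 * (ε * r₀)) • ν with hzpdef
  set zm : Euc N := x₀ + q + (-(3 / 2 * (ε * r₀))) • ν with hzmdef
  have hzpS : zp ∈ ball x₀ r₀ \ K := hseg _ (le_of_eq (abs_of_nonneg (by positivity)))
  have hzmS : zm ∈ ball x₀ r₀ \ K :=
    hseg _ (le_of_eq ((abs_neg _).trans (abs_of_nonneg (by positivity))))
  -- regions
  set Up : Set (Euc N) := ball x₀ r₀ ∩ {z : Euc N | ε * r₀ < (inner ℝ (z - x₀) ν : ℝ)} with hUpdef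
  set Um : Set (Euc N) := ball x₀ r₀ ∩ {z : Euc N | (inner ℝ (z - x₀) ν : ℝ) < -(ε * r₀)} with hUmdef
  set Vp : Set (Euc N) := ball x₀ r₀ ∩ {z : Euc N | r₀ / 2 < (inner ℝ (z - x₀) ν' : ℝ)} with hVpdef
  set Vm : Set (Euc N) := ball x₀ r₀ ∩ {z : Euc N | (inner ℝ (z - x₀) ν' : ℝ) < -(r₀ / 2)} with hVmdef
  have hUpS : Up ⊆ ball x₀ r₀ \ K := by
    rintro z ⟨hz1, hz2⟩
    refine ⟨hz1, fun hzK => ?_⟩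
    have h1 := hKν z hzK hz1
    have h2 : ε * r₀ < (inner ℝ (z - x₀) ν : ℝ) := hz2
    have h3 := le_abs_self (inner ℝ (z - x₀) ν : ℝ)
    linarith
  have hUmS : Um ⊆ ball x₀ r₀ \ K := by
    rintro z ⟨hz1, hz2⟩
    refine ⟨hz1, fun hzK => ?_⟩
    have h1 := hKν z hzK hz1
    have h2 : (inner ℝ (z - x₀) ν : ℝ) < -(ε * r₀) := hz2
    have h3 := neg_abs_le (inner ℝ (z - x₀) ν : ℝ)
    linarith
  have hVpS : Vp ⊆ ball x₀ r₀ \ K := by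
    rintro z ⟨hz1, hz2⟩
    refine ⟨hz1, fun hzK => ?_⟩
    have h1 := hKν' z hzK hz1
    have h2 : r₀ / 2 < (inner ℝ (z - x₀) ν' : ℝ) := hz2
    have h3 := le_abs_self (inner ℝ (z - x₀) ν' : ℝ)
    linarith
  have hVmS : Vm ⊆ ball x₀ r₀ \ K := by
    rintro z ⟨hz1, hz2⟩
    refine ⟨hz1, fun hzK => ?_⟩
    have h1 := hKν' z hzK hz1
    have h2 : (inner ℝ (z - x₀) ν' : ℝ) < -(r₀ / 2) := hz2
    have h3 := neg_abs_le (inner ℝ (z - x₀) ν' : ℝ)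
    linarith
  -- endpoints in Up / Um
  have hzpi : (inner ℝ (zp - x₀) ν : ℝ) = 3 / 2 * (ε * r₀) := by
    have hzz : zp - x₀ = q + (3 / 2 * (ε * r₀)) • ν := by rw [hzpdef]; abel
    rw [hzz, inner_add_left, hqν, real_inner_smul_left, hνν]
    ring
  have hzmi : (inner ℝ (zm - x₀) ν : ℝ) = -(3 / 2 * (ε * r₀)) := by
    have hzz : zm - x₀ = q + (-(3 / 2 * (ε * r₀))) • ν := by rw [hzmdef]; abel
    rw [hzz, inner_add_left, hqν, real_inner_smul_left, hνν]
    ring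
  have hzpUp : zp ∈ Up := ⟨hzpS.1, by rw [mem_setOf_eq, hzpi]; linarith⟩
  have hzmUm : zm ∈ Um := ⟨hzmS.1, by rw [mem_setOf_eq, hzmi]; linarith⟩
  -- the segment is in S
  have hsegsub : segment ℝ zm zp ⊆ ball x₀ r₀ \ K := by
    rintro z ⟨a, b, ha, hb, hab, rfl⟩
    have hb' : b = 1 - a := by linarith
    have hz : a • zm + b • zp = x₀ + q + ((b - a) * (3 / 2 * (ε * r₀))) • ν := by
      rw [hzmdef, hzpdef, hb']
      module
    rw [hz]
    apply hseg
    have hba : |b - a| ≤ 1 := abs_le.2 ⟨by linarith, by linarith⟩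
    rw [abs_mul, abs_of_nonneg (by positivity : (0:ℝ) ≤ 3 / 2 * (ε * r₀))]
    exact mul_le_of_le_one_left (by positivity) hba
  -- the connected bridge W
  have hUpc : IsPreconnected Up :=
    ((convex_ball x₀ r₀).inter (aux_convex_gt x₀ ν (ε * r₀))).isPreconnected
  have hUmc : IsPreconnected Um :=
    ((convex_ball x₀ r₀).inter (aux_convex_lt x₀ ν (-(ε * r₀)))).isPreconnected
  have hVpc : IsPreconnected Vp :=
    ((convex_ball x₀ r₀).inter (aux_convex_gt x₀ ν' (r₀ / 2))).isPreconnected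
  have hVmc : IsPreconnected Vm :=
    ((convex_ball x₀ r₀).inter (aux_convex_lt x₀ ν' (-(r₀ / 2)))).isPreconnected
  have hW1 : IsPreconnected (Up ∪ segment ℝ zm zp) :=
    IsPreconnected.union zp hzpUp (right_mem_segment ℝ zm zp) hUpc
      (convex_segment zm zp).isPreconnected
  have hWc : IsPreconnected (Up ∪ segment ℝ zm zp ∪ Um) :=
    IsPreconnected.union zm (Or.inr (left_mem_segment ℝ zm zp)) hzmUm hW1 hUmc
  have hWS : Up ∪ segment ℝ zm zp ∪ Um ⊆ ball x₀ r₀ \ K := by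
    rintro z ((hz | hz) | hz)
    · exact hUpS hz
    · exact hsegsub hz
    · exact hUmS hz
  -- the points pp, pm
  set α : ℝ := inner ℝ ν ν' with hαdef
  set w' : Euc N := ν - α • ν' with hw'def
  have hw'ν' : (inner ℝ w' ν' : ℝ) = 0 := by
    rw [hw'def, inner_sub_left, real_inner_smul_left, hνν']
    ring
  have hw'ν : (inner ℝ w' ν : ℝ) = 1 - α ^ 2 := by
    rw [hw'def, inner_sub_left, hνν, real_inner_smul_left, real_inner_comm ν ν', ← hαdef]
    ring
  have hw'n : ‖w'‖ ^ 2 = 1 - α ^ 2 := by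
    rw [← real_inner_self_eq_norm_sq]
    nth_rewrite 1 [hw'def]
    rw [inner_sub_left, real_inner_smul_left, real_inner_comm w' ν, real_inner_comm w' ν',
      hw'ν, hw'ν']
    ring
  have hα1 : |α| ≤ 1 := by
    have h := abs_real_inner_le_norm ν ν'
    rw [hν, hν'1, one_mul] at h
    exact h
  have hwge : (0:ℝ) ≤ ‖w'‖ := norm_nonneg _
  have hwle : ‖w'‖ ≤ 1 := sc_wle _ (norm_nonneg _) (by linarith [hw'n, sq_nonneg α])
  set what : Euc N := ‖w'‖⁻¹ • w' with hwhatdef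
  have hwhatν' : (inner ℝ what ν' : ℝ) = 0 := by
    rw [hwhatdef, real_inner_smul_left, hw'ν', mul_zero]
  have hwhatν : (inner ℝ what ν : ℝ) = ‖w'‖ := by
    rw [hwhatdef, real_inner_smul_left, hw'ν, ← hw'n]
    rcases eq_or_ne ‖w'‖ 0 with h | h
    · rw [h]; simp
    · field_simp
  have hwhatn : ‖what‖ ^ 2 ≤ 1 := by
    rw [hwhatdef, norm_smul, Real.norm_eq_abs, abs_of_nonneg (inv_nonneg.2 hwge)]
    rcases eq_or_ne ‖w'‖ 0 with h | h
    · rw [h]; norm_num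
    · rw [inv_mul_cancel₀ h]; norm_num
  set a0 : ℝ := 3 / 5 * r₀ with ha0def
  have ha0 : 0 < a0 := by rw [ha0def]; linarith
  set b0 : ℝ := if 0 ≤ α then a0 else -a0 with hb0def
  have hb0sq : b0 ^ 2 = a0 ^ 2 := by
    rw [hb0def]
    split_ifs <;> ring
  set pp : Euc N := x₀ + (a0 • ν' + b0 • what) with hppdef
  set pm : Euc N := x₀ - (a0 • ν' + b0 • what) with hpmdef
  have hppx : pp - x₀ = a0 • ν' + b0 • what := by rw [hppdef]; abel
  have hpmx : pm - x₀ = -(a0 • ν' + b0 • what) := by rw [hpmdef]; abel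
  have hppν' : (inner ℝ (pp - x₀) ν' : ℝ) = a0 := by
    rw [hppx, inner_add_left, real_inner_smul_left, real_inner_smul_left, hνν', hwhatν']
    ring
  have hpmν' : (inner ℝ (pm - x₀) ν' : ℝ) = -a0 := by
    rw [hpmx, inner_neg_left, inner_add_left, real_inner_smul_left, real_inner_smul_left,
      hνν', hwhatν']
    ring
  have hppν : (inner ℝ (pp - x₀) ν : ℝ) = a0 * α + b0 * ‖w'‖ := by
    rw [hppx, inner_add_left, real_inner_smul_left, real_inner_smul_left, hwhatν,
      real_inner_comm ν ν', ← hαdef]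
  have hpmν : (inner ℝ (pm - x₀) ν : ℝ) = -(a0 * α + b0 * ‖w'‖) := by
    rw [hpmx, inner_neg_left, inner_add_left, real_inner_smul_left, real_inner_smul_left,
      hwhatν, real_inner_comm ν ν', ← hαdef]
  have hppnorm : ‖a0 • ν' + b0 • what‖ ^ 2 ≤ 2 * a0 ^ 2 := by
    have h1 : ‖a0 • ν'‖ ^ 2 = a0 ^ 2 := by
      rw [norm_smul, hν'1, mul_one, Real.norm_eq_abs, sq_abs]
    have h2 : ‖b0 • what‖ ^ 2 ≤ a0 ^ 2 := by
      rw [norm_smul, mul_pow, Real.norm_eq_abs, sq_abs, hb0sq]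
      exact mul_le_of_le_one_right (sq_nonneg a0) hwhatn
    have h3 : (inner ℝ (a0 • ν') (b0 • what) : ℝ) = 0 := by
      rw [real_inner_smul_left, real_inner_smul_right, real_inner_comm what ν', hwhatν']
      ring
    rw [norm_add_sq_real, h3, h1]
    linarith [h2]
  have ha0r : 2 * a0 ^ 2 < r₀ ^ 2 := by
    rw [ha0def]
    linarith [mul_pos hr₀ hr₀]
  have hppball : pp ∈ ball x₀ r₀ := by
    rw [mem_ball, dist_eq_norm, show pp - x₀ = a0 • ν' + b0 • what from hppx]
    exact sc_norm_lt _ _ (norm_nonneg _) hr₀ (by linarith [hppnorm, ha0r])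
  have hpmball : pm ∈ ball x₀ r₀ := by
    rw [mem_ball, dist_eq_norm, show pm - x₀ = -(a0 • ν' + b0 • what) from hpmx, norm_neg]
    exact sc_norm_lt _ _ (norm_nonneg _) hr₀ (by linarith [hppnorm, ha0r])
  have hJ : a0 ≤ |a0 * α + b0 * ‖w'‖| := by
    rcases le_or_gt 0 α with hαp | hαn
    · have hb0' : b0 = a0 := by rw [hb0def, if_pos hαp]
      rw [hb0']
      refine le_trans ?_ (le_abs_self _)
      have hα1' : α ≤ 1 := (abs_le.1 hα1).2
      have hsum : 1 ≤ α + ‖w'‖ := sc_sum1 α ‖w'‖ hαp hα1' hwge hwle hw'n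
      linarith [sc_scale a0 α ‖w'‖ ha0.le hsum]
    · have hb0' : b0 = -a0 := by rw [hb0def, if_neg (not_le.2 hαn)]
      rw [hb0']
      refine le_trans ?_ (neg_le_abs _)
      have hα1' : -1 ≤ α := (abs_le.1 hα1).1
      have hsum : 1 ≤ -α + ‖w'‖ :=
        sc_sum1 (-α) ‖w'‖ (by linarith) (by linarith) hwge hwle (by rw [hw'n]; ring)
      linarith [sc_scale a0 (-α) ‖w'‖ ha0.le hsum]
  have ha0E : ε * r₀ < a0 := by rw [ha0def]; linarith
  have hppUm : pp ∈ Up ∪ Um := by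
    rcases le_abs.1 hJ with hca | hca
    · exact Or.inl ⟨hppball, by rw [mem_setOf_eq, hppν]; linarith⟩
    · exact Or.inr ⟨hppball, by rw [mem_setOf_eq, hppν]; linarith⟩
  have hpmUm : pm ∈ Up ∪ Um := by
    rcases le_abs.1 hJ with hca | hca
    · exact Or.inr ⟨hpmball, by rw [mem_setOf_eq, hpmν]; linarith⟩
    · exact Or.inl ⟨hpmball, by rw [mem_setOf_eq, hpmν]; linarith⟩
  have hppVp : pp ∈ Vp := ⟨hppball, by rw [mem_setOf_eq, hppν', ha0def]; linarith⟩
  have hpmVm : pm ∈ Vm := ⟨hpmball, by rw [mem_setOf_eq, hpmν', ha0def]; linarith⟩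
  -- the two centers
  have hcp : x₀ + (3 / 4 * r₀) • ν' ∈ Vp := by
    have hxx : x₀ + (3 / 4 * r₀) • ν' - x₀ = (3 / 4 * r₀) • ν' := by abel
    constructor
    · rw [mem_ball, dist_eq_norm, hxx, norm_smul, hν'1, mul_one, Real.norm_eq_abs,
        abs_of_nonneg (by linarith)]
      linarith
    · rw [mem_setOf_eq, hxx, real_inner_smul_left, hνν']
      linarith
  have hcm : x₀ - (3 / 4 * r₀) • ν' ∈ Vm := by
    have hxx : x₀ - (3 / 4 * r₀) • ν' - x₀ = -((3 / 4 * r₀) • ν') := by abel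
    constructor
    · rw [mem_ball, dist_eq_norm, hxx, norm_neg, norm_smul, hν'1, mul_one, Real.norm_eq_abs,
        abs_of_nonneg (by linarith)]
      linarith
    · rw [mem_setOf_eq, hxx, inner_neg_left, real_inner_smul_left, hνν']
      linarith
  -- pp, pm in the bridge
  have hppW : pp ∈ Up ∪ segment ℝ zm zp ∪ Um := by
    rcases hppUm with h | h
    · exact Or.inl (Or.inl h)
    · exact Or.inr h
  have hpmW : pm ∈ Up ∪ segment ℝ zm zp ∪ Um := by
    rcases hpmUm with h | h
    · exact Or.inl (Or.inl h)
    · exact Or.inr h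
  -- conclude
  have e1 := aux_compo_eq hVpc hVpS hcp hppVp
  have e2 := aux_compo_eq hWc hWS hppW hpmW
  have e3 := aux_compo_eq hVmc hVmS hpmVm hcm
  apply hne
  unfold posCompo negCompo
  exact e1.trans (e2.trans e3)
end
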